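/- Let Q_n be the orthogonal polynomials defined by Q_0=1, Q_1=x-(α+β), Q_n=(x-(α+2β))Q_{n-1}-β(α+β)Q_{n-2}. Then the coefficient array of the Q_n is the Riordan array (1/(1+(α+β)x), x/((1+βx)(1+(α+β)x))): for all n, k, [x^k]Q_n(x) = [x^n]( (1/(1+(α+β)x)) · (x/((1+βx)(1+(α+β)x)))^k ). -/

import Mathlib

open PowerSeries

/-- The coefficient array of the orthogonal polynomials `Q_n` with `Q_0 = 1`,
`Q_1 = x-(α+β)`, `Q_n = (x-(α+2β))Q_{n-1} - β(α+β)Q_{n-2}` is the Riordan array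
`(1/(1+(α+β)x), x/((1+βx)(1+(α+β)x)))`. -/
theorem orthogonal_coeff_array {R : Type*} [CommRing R] (α β : R)
    (Q : ℕ → Polynomial R)
    (hQ0 : Q 0 = 1)
    (hQ1 : Q 1 = Polynomial.X - Polynomial.C (α + β))
    (hQrec : ∀ n, Q (n + 2) =
      (Polynomial.X - Polynomial.C (α + 2 * β)) * Q (n + 1)
        - Polynomial.C (β * (α + β)) * Q n) :
    ∀ n k : ℕ, (Q n).coeff k =
      PowerSeries.coeff n
        ((PowerSeries.invOfUnit (1 + PowerSeries.C (α + β) * PowerSeries.X) 1) *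
          (PowerSeries.X *
            PowerSeries.invOfUnit
              ((1 + PowerSeries.C β * PowerSeries.X) *
                (1 + PowerSeries.C (α + β) * PowerSeries.X)) 1) ^ k) := by
  set g := PowerSeries.invOfUnit (1 + PowerSeries.C (α + β) * PowerSeries.X) 1 with hg
  set u := (1 + PowerSeries.C β * PowerSeries.X) *
      (1 + PowerSeries.C (α + β) * PowerSeries.X) with hu
  set v := PowerSeries.invOfUnit u 1 with hv
  set f := PowerSeries.X * v with hf
  have h1 : (1 + PowerSeries.C (α + β) * PowerSeries.X) * g = 1 :=
    PowerSeries.mul_invOfUnit _ 1 (by simp)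
  have h2 : u * v = 1 := PowerSeries.mul_invOfUnit _ 1 (by simp [hu])
  have hfu : u * f = PowerSeries.X := by
    rw [hf, mul_comm PowerSeries.X v, ← mul_assoc, h2, one_mul]
  have hgu : g * u = 1 + PowerSeries.C β * PowerSeries.X := by
    rw [hu, mul_comm (1 + PowerSeries.C β * PowerSeries.X), ← mul_assoc, mul_comm g, h1,
      one_mul]
  -- u expanded
  have huexp : u = 1 + PowerSeries.C (α + 2 * β) * PowerSeries.X
      + PowerSeries.C (β * (α + β)) * PowerSeries.X ^ 2 := by
    rw [hu]
    simp only [map_add, map_mul, map_one, map_pow, map_ofNat]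
    ring
  have hcu : ∀ (S : R⟦X⟧) (n : ℕ), PowerSeries.coeff (n + 2) (S * u) =
      PowerSeries.coeff (n + 2) S + (α + 2 * β) * PowerSeries.coeff (n + 1) S
        + β * (α + β) * PowerSeries.coeff n S := by
    intro S n
    rw [huexp]
    have e1 : S * (1 + PowerSeries.C (α + 2 * β) * PowerSeries.X
        + PowerSeries.C (β * (α + β)) * PowerSeries.X ^ 2)
      = S + PowerSeries.C (α + 2 * β) * (S * PowerSeries.X)
        + PowerSeries.C (β * (α + β)) * ((S * PowerSeries.X) * PowerSeries.X) := by ring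
    rw [e1, map_add, map_add, PowerSeries.coeff_C_mul, PowerSeries.coeff_C_mul,
      PowerSeries.coeff_succ_mul_X, PowerSeries.coeff_succ_mul_X, PowerSeries.coeff_succ_mul_X]
  have key : ∀ n k : ℕ, PowerSeries.coeff (n + 2) (g * f ^ k)
      = (if k = 0 then 0 else PowerSeries.coeff (n + 1) (g * f ^ (k - 1)))
        - (α + 2 * β) * PowerSeries.coeff (n + 1) (g * f ^ k)
        - β * (α + β) * PowerSeries.coeff n (g * f ^ k) := by
    intro n k
    cases k with
    | zero =>
      have h3 := hcu g n
      have h0 : PowerSeries.coeff (n + 2) (g * u) = 0 := by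
        rw [hgu]
        simp [PowerSeries.coeff_X]
      rw [h0] at h3
      simp only [pow_zero, mul_one, reduceIte]
      linear_combination -h3
    | succ k =>
      have h3 := hcu (g * f ^ (k + 1)) n
      have hh : g * f ^ (k + 1) * u = PowerSeries.X * (g * f ^ k) := by
        rw [pow_succ]
        calc g * (f ^ k * f) * u = (u * f) * (g * f ^ k) := by ring
        _ = PowerSeries.X * (g * f ^ k) := by rw [hfu]
      rw [hh, mul_comm PowerSeries.X, PowerSeries.coeff_succ_mul_X] at h3
      rw [if_neg (Nat.succ_ne_zero k), Nat.add_sub_cancel]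
      linear_combination -h3
  intro n
  induction n using Nat.twoStepInduction with
  | zero =>
    intro k
    rw [hQ0]
    cases k with
    | zero =>
      have h : PowerSeries.coeff 0 (g * f ^ 0) = 1 := by
        simp only [pow_zero, mul_one, PowerSeries.coeff_zero_eq_constantCoeff, hg]
        rw [PowerSeries.constantCoeff_invOfUnit]
        simp
      rw [h]
      simp
    | succ k =>
      have h : PowerSeries.coeff 0 (g * f ^ (k + 1)) = 0 := by
        simp only [PowerSeries.coeff_zero_eq_constantCoeff, map_mul, hf, mul_pow]
        simp [map_pow]
      rw [h, Polynomial.coeff_one]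
      simp
  | one =>
    intro k
    rw [hQ1]
    match k with
    | 0 =>
      have h0 : PowerSeries.coeff 0 g = 1 := by
        simp only [PowerSeries.coeff_zero_eq_constantCoeff, hg]
        rw [PowerSeries.constantCoeff_invOfUnit]; simp
      have hc : PowerSeries.coeff 1 ((1 + PowerSeries.C (α + β) * PowerSeries.X) * g) = 0 := by
        rw [h1]; simp
      have e : (1 + PowerSeries.C (α + β) * PowerSeries.X) * g
          = g + PowerSeries.C (α + β) * (g * PowerSeries.X) := by ring
      rw [e, map_add, PowerSeries.coeff_C_mul,
        show (1 : ℕ) = 0 + 1 from rfl, PowerSeries.coeff_succ_mul_X, h0, mul_one] at hc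
      have : PowerSeries.coeff (0 + 1) g = -(α + β) := by linear_combination hc
      rw [pow_zero, mul_one, this]
      simp
    | 1 =>
      have h : PowerSeries.coeff 1 (g * f ^ 1) = 1 := by
        rw [pow_one, hf, show g * (PowerSeries.X * v) = PowerSeries.X * (g * v) by ring,
          show (1 : ℕ) = 0 + 1 from rfl, mul_comm PowerSeries.X, PowerSeries.coeff_succ_mul_X]
        simp only [PowerSeries.coeff_zero_eq_constantCoeff, map_mul, hg, hv]
        rw [PowerSeries.constantCoeff_invOfUnit, PowerSeries.constantCoeff_invOfUnit]
        simp
      rw [h]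
      simp
    | (k + 2) =>
      have h : PowerSeries.coeff 1 (g * f ^ (k + 2)) = 0 := by
        rw [hf, mul_pow, show g * (PowerSeries.X ^ (k + 2) * v ^ (k + 2))
          = PowerSeries.X ^ (k + 2) * (g * v ^ (k + 2)) by ring,
          PowerSeries.coeff_X_pow_mul']
        simp
      rw [h]
      simp [Polynomial.coeff_X]
  | more n ih ih1 =>
    intro k
    rw [hQrec n, key n k]
    cases k with
    | zero =>
      simp only [reduceIte]
      rw [← ih1 0, ← ih 0]
      simp only [Polynomial.coeff_sub, sub_mul, Polynomial.mul_coeff_zero,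
        Polynomial.coeff_X_zero, Polynomial.coeff_C_mul, Polynomial.coeff_C_zero]
      ring
    | succ k =>
      rw [if_neg (Nat.succ_ne_zero k), Nat.add_sub_cancel,
        ← ih1 k, ← ih1 (k + 1), ← ih (k + 1)]
      simp only [Polynomial.coeff_sub, sub_mul, Polynomial.coeff_X_mul, Polynomial.coeff_C_mul]
      try ring
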